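/- Let R be a commutative ring, Q a quiver, and J, J' two-sided ideals of the path algebra RQ̄ of the doubled quiver such that J and J' are both contained in the span of paths of length ≥ 2 and agree modulo paths of length ≥ 3 (i.e. generated by elements r and r' with r - r' a combination of paths of length ≥ 3). If φ: RQ̄/J → RQ̄/J' is an algebra map sending each vertex idempotent to itself and each arrow a to c_a·a plus paths of length ≥ 2, and φ is well-defined, then for the additive preprojective relation r_add = Σ_a (aa* − a*a): the degree-2 part of φ(r_add) is Σ_a c_a c_{a*}(aa* − a*a); hence surjectivity of φ forces all c_a c_{a*} with a incident to a fixed vertex to be equal. -/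

import Mathlib

namespace Trunc3

variable (k : Type*) [Field k] (V E : Type*) [DecidableEq V] (s t : E → V)

/-- Truncated (length ≤ 2) path algebra model. `s`,`t` are phantom parameters
recording the source and target maps used in the multiplication. -/
def Tr (_s _t : E → V) : Type _ := (V → k) × (E → k) × (E × E → k)

variable {k V E s t}

instance : AddCommGroup (Tr k V E s t) :=
  Prod.instAddCommGroup
instance : Module k (Tr k V E s t) :=
  Prod.instModule


@[simp] lemma add_def (x y : Tr k V E s t) :
    x + y = ⟨x.1 + y.1, x.2.1 + y.2.1, x.2.2 + y.2.2⟩ := rfl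
@[simp] lemma smul_def (r : k) (x : Tr k V E s t) :
    r • x = ⟨r • x.1, r • x.2.1, r • x.2.2⟩ := rfl
lemma kadd_eq (a b : k) : Add.add a b = a + b := rfl
@[simp] lemma zero_fst : (0 : Tr k V E s t).1 = 0 := rfl
@[simp] lemma zero_snd1 : (0 : Tr k V E s t).2.1 = 0 := rfl
@[simp] lemma zero_snd2 : (0 : Tr k V E s t).2.2 = 0 := rfl

/-- multiplication -/
def mul (x y : Tr k V E s t) : Tr k V E s t :=
  ⟨fun v => x.1 v * y.1 v,
   fun a => x.1 (s a) * y.2.1 a + x.2.1 a * y.1 (t a),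
   fun p => x.1 (s p.1) * y.2.2 p +
     (if t p.1 = s p.2 then x.2.1 p.1 * y.2.1 p.2 else 0) + x.2.2 p * y.1 (t p.2)⟩

def one : Tr k V E s t := ⟨fun _ => 1, 0, 0⟩

set_option maxHeartbeats 1000000 in
noncomputable instance ring : Ring (Tr k V E s t) :=
  { (inferInstance : AddCommGroup (Tr k V E s t)) with
    mul := mul
    one := one
    mul_assoc := by
      rintro ⟨f, g, h⟩ ⟨f', g', h'⟩ ⟨f'', g'', h''⟩
      show mul (mul _ _) _ = mul _ (mul _ _)
      unfold mul
      refine Prod.ext (funext fun v => by ring) (Prod.ext (funext fun a => by ring)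
        (funext fun p => ?_))
      dsimp only
      split_ifs with hc
      · rw [hc]; ring
      · ring
    one_mul := by
      rintro ⟨f, g, h⟩
      show mul one _ = _
      unfold mul one
      refine Prod.ext (funext fun v => by simp) (Prod.ext (funext fun a => by simp)
        (funext fun p => ?_))
      dsimp only [Pi.zero_apply]
      split_ifs <;> simp
    mul_one := by
      rintro ⟨f, g, h⟩
      show mul _ one = _
      unfold mul one
      refine Prod.ext (funext fun v => by simp) (Prod.ext (funext fun a => by simp)
        (funext fun p => ?_))
      dsimp only [Pi.zero_apply]
      split_ifs <;> simp
    left_distrib := by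
      rintro ⟨f, g, h⟩ ⟨f', g', h'⟩ ⟨f'', g'', h''⟩
      show mul _ _ = mul _ _ + mul _ _
      unfold mul
      simp only [add_def (s := s) (t := t) (k := k), Pi.add_apply]
      refine Prod.ext (funext fun v => by dsimp [HAdd.hAdd, Add.add, HSMul.hSMul, SMul.smul]; simp only [kadd_eq]; ring) (Prod.ext (funext fun a => by dsimp [HAdd.hAdd, Add.add, HSMul.hSMul, SMul.smul]; simp only [kadd_eq]; ring)
        (funext fun p => ?_))
      dsimp [HAdd.hAdd, Add.add, HSMul.hSMul, SMul.smul]; simp only [kadd_eq]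
      split_ifs <;> ring
    right_distrib := by
      rintro ⟨f, g, h⟩ ⟨f', g', h'⟩ ⟨f'', g'', h''⟩
      show mul _ _ = mul _ _ + mul _ _
      unfold mul
      simp only [add_def (s := s) (t := t) (k := k), Pi.add_apply]
      refine Prod.ext (funext fun v => by dsimp [HAdd.hAdd, Add.add, HSMul.hSMul, SMul.smul]; simp only [kadd_eq]; ring) (Prod.ext (funext fun a => by dsimp [HAdd.hAdd, Add.add, HSMul.hSMul, SMul.smul]; simp only [kadd_eq]; ring)
        (funext fun p => ?_))
      dsimp [HAdd.hAdd, Add.add, HSMul.hSMul, SMul.smul]; simp only [kadd_eq]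
      split_ifs <;> ring
    zero_mul := by
      rintro ⟨f, g, h⟩
      show mul 0 _ = 0
      unfold mul
      refine Prod.ext (funext fun v => by simp [Tr]) (Prod.ext (funext fun a => by simp [Tr])
        (funext fun p => ?_))
      show (0:V → k) (s p.1) * _ + _ + (0:E×E → k) p * _ = (0 : E×E→k) p
      split_ifs <;> simp [Tr]
    mul_zero := by
      rintro ⟨f, g, h⟩
      show mul _ 0 = 0
      unfold mul
      refine Prod.ext (funext fun v => by simp [Tr]) (Prod.ext (funext fun a => by simp [Tr])
        (funext fun p => ?_))
      show _ * (0:E×E→k) p + _ + _ * (0:V→k) _ = (0 : E×E→k) p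
      split_ifs <;> simp [Tr] }

noncomputable instance algebra : Algebra k (Tr k V E s t) := by
  refine Algebra.ofModule ?_ ?_ <;>
  · rintro r ⟨f, g, h⟩ ⟨f', g', h'⟩
    show mul _ _ = r • mul _ _
    unfold mul
    simp only [smul_def (s := s) (t := t) (k := k), Pi.smul_apply, smul_eq_mul]
    refine Prod.ext (funext fun v => by dsimp [HAdd.hAdd, Add.add, HSMul.hSMul, SMul.smul]; ring) (Prod.ext (funext fun a => by dsimp [HAdd.hAdd, Add.add, HSMul.hSMul, SMul.smul]; simp only [kadd_eq]; ring)
      (funext fun p => ?_))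
    dsimp [HAdd.hAdd, Add.add, HSMul.hSMul, SMul.smul]; simp only [kadd_eq]
    split_ifs <;> ring

@[simp] lemma mul_def (x y : Tr k V E s t) : x * y = mul x y := rfl
@[simp] lemma one_def : (1 : Tr k V E s t) = one := rfl


set_option linter.unusedSectionVars false

def pr0 : Tr k V E s t →ₗ[k] (V → k) :=
  { toFun := fun x => x.1, map_add' := fun _ _ => rfl, map_smul' := fun _ _ => rfl }
def pr1 : Tr k V E s t →ₗ[k] (E → k) :=
  { toFun := fun x => x.2.1, map_add' := fun _ _ => rfl, map_smul' := fun _ _ => rfl }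
def pr2 : Tr k V E s t →ₗ[k] (E × E → k) :=
  { toFun := fun x => x.2.2, map_add' := fun _ _ => rfl, map_smul' := fun _ _ => rfl }

lemma tr_ext {x y : Tr k V E s t} (h0 : x.1 = y.1) (h1 : x.2.1 = y.2.1) (h2 : x.2.2 = y.2.2) :
    x = y := Prod.ext h0 (Prod.ext h1 h2)

noncomputable def eV (i : V) : Tr k V E s t :=
  ⟨fun j => if i = j then 1 else 0, 0, 0⟩

open scoped Classical in
noncomputable def eA (a : E) : Tr k V E s t :=
  ⟨0, fun b => if a = b then 1 else 0, 0⟩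

lemma eV_mul_eV (i j : V) :
    (eV i : Tr k V E s t) * eV j = if i = j then eV i else 0 := by
  show mul _ _ = _
  unfold mul eV
  split_ifs with hij
  · subst hij
    refine tr_ext (funext fun v => ?_) (funext fun a => by simp) (funext fun p => ?_)
    · dsimp only; split_ifs <;> simp_all
    · dsimp only [Pi.zero_apply]; split_ifs <;> simp
  · simp only [hij, if_false]
    refine tr_ext (funext fun v => ?_) (funext fun a => by simp [show ((0:Tr k V E s t)).1 = 0 from rfl]) (funext fun p => ?_)
    · show _ = (0 : V → k) v
      dsimp only; split_ifs with h1 h2 <;> simp_all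
    · show _ = (0 : E × E → k) p
      dsimp only [Pi.zero_apply]; split_ifs <;> simp

lemma sum_eV [Fintype V] : (∑ i : V, (eV i : Tr k V E s t)) = 1 := by
  refine tr_ext ?_ ?_ ?_
  · have h := map_sum (pr0 (k := k) (V := V) (E := E) (s := s) (t := t)) eV Finset.univ
    show pr0 (s := s) (t := t) _ = _
    rw [h]
    funext j
    show (∑ i : V, (eV (s := s) (t := t) i).1) j = (1 : k)
    rw [Finset.sum_apply]
    simp [eV]
  · have h := map_sum (pr1 (k := k) (V := V) (E := E) (s := s) (t := t)) eV Finset.univ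
    show pr1 (s := s) (t := t) _ = _
    rw [h]
    simp [eV, pr1, one_def, one]
  · have h := map_sum (pr2 (k := k) (V := V) (E := E) (s := s) (t := t)) eV Finset.univ
    show pr2 (s := s) (t := t) _ = _
    rw [h]
    simp [eV, pr2, one_def, one]

lemma eV_mul_eA (a : E) : (eV (s a) : Tr k V E s t) * eA a = eA a := by
  show mul _ _ = _
  unfold mul eV eA
  refine tr_ext (funext fun v => by simp) (funext fun b => ?_) (funext fun p => ?_)
  · dsimp only [Pi.zero_apply]
    split_ifs with h1 h2 h2 <;> simp_all
  · dsimp only [Pi.zero_apply]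
    split_ifs <;> simp

lemma eA_mul_eV (a : E) : (eA a : Tr k V E s t) * eV (t a) = eA a := by
  show mul _ _ = _
  unfold mul eV eA
  refine tr_ext (funext fun v => by simp) (funext fun b => ?_) (funext fun p => ?_)
  · dsimp only [Pi.zero_apply]
    split_ifs with h1 h2 h2 <;> simp_all
  · dsimp only [Pi.zero_apply]
    split_ifs <;> simp

open scoped Classical in
lemma eA_mul_eA (a b : E) : (eA a : Tr k V E s t) * eA b =
    ⟨0, 0, fun p => if t p.1 = s p.2 then
      (if a = p.1 then 1 else 0) * (if b = p.2 then 1 else 0) else 0⟩ := by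
  show mul _ _ = _
  unfold mul eA
  refine tr_ext (funext fun v => by simp) (funext fun c => by simp) (funext fun p => ?_)
  dsimp only [Pi.zero_apply]
  split_ifs <;> simp

-- degree lemmas
lemma mul_fst (x y : Tr k V E s t) : (x * y).1 = fun v => x.1 v * y.1 v := rfl

lemma P1_mul {x y : Tr k V E s t} (hx : x.1 = 0) (hy : y.1 = 0) : (x * y).1 = 0 := by
  rw [mul_fst, hx, hy]; funext v; simp

lemma P1_mul_snd {x y : Tr k V E s t} (hx : x.1 = 0) (hy : y.1 = 0) : (x * y).2.1 = 0 := by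
  show (fun a => x.1 (s a) * y.2.1 a + x.2.1 a * y.1 (t a)) = 0
  rw [hx, hy]; funext a; simp

lemma P2_mul_P1 {x y : Tr k V E s t} (hx0 : x.1 = 0) (hx1 : x.2.1 = 0) (hy : y.1 = 0) :
    x * y = 0 := by
  refine tr_ext ?_ ?_ ?_
  · rw [P1_mul hx0 hy]; rfl
  · show (fun a => x.1 (s a) * y.2.1 a + x.2.1 a * y.1 (t a)) = _
    rw [hx0, hx1]; funext a; simp
  · show (fun p => x.1 (s p.1) * y.2.2 p +
      (if t p.1 = s p.2 then x.2.1 p.1 * y.2.1 p.2 else 0) + x.2.2 p * y.1 (t p.2)) = _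
    rw [hx0, hx1, hy]
    funext p
    show 0 * _ + (if _ then (0:k) * _ else 0) + _ * 0 = (0 : E × E → k) p
    split_ifs <;> simp

lemma prod_P1 {L : List (Tr k V E s t)} (hne : L ≠ []) (h : ∀ x ∈ L, x.1 = 0) :
    L.prod.1 = 0 := by
  induction L with
  | nil => exact absurd rfl hne
  | cons a L ih =>
    rcases L with _ | ⟨b, L'⟩
    · rw [List.prod_singleton]; exact h a (by simp)
    · rw [List.prod_cons]
      exact P1_mul (h a (by simp)) (ih (by simp) (fun x hx => h x (by simp [hx])))

lemma prod_len3 {L : List (Tr k V E s t)} (hlen : 3 ≤ L.length) (h : ∀ x ∈ L, x.1 = 0) :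
    L.prod = 0 := by
  rcases L with _ | ⟨a, _ | ⟨b, L'⟩⟩
  · simp at hlen
  · simp at hlen
  · have hL' : L' ≠ [] := by
      rintro rfl; simp at hlen
    rw [List.prod_cons, List.prod_cons, ← mul_assoc]
    have ha := h a (by simp)
    have hb := h b (by simp)
    have := P2_mul_P1 (P1_mul ha hb) (P1_mul_snd ha hb)
      (prod_P1 hL' (fun x hx => h x (by simp [hx])))
    exact this

lemma fst_sum {ι : Type*} (S : Finset ι) (f : ι → Tr k V E s t) :
    (∑ i ∈ S, f i).1 = ∑ i ∈ S, (f i).1 := map_sum (pr0 (s := s) (t := t)) f S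

lemma snd1_sum {ι : Type*} (S : Finset ι) (f : ι → Tr k V E s t) :
    (∑ i ∈ S, f i).2.1 = ∑ i ∈ S, (f i).2.1 := map_sum (pr1 (s := s) (t := t)) f S

lemma snd2_sum {ι : Type*} (S : Finset ι) (f : ι → Tr k V E s t) :
    (∑ i ∈ S, f i).2.2 = ∑ i ∈ S, (f i).2.2 := map_sum (pr2 (s := s) (t := t)) f S

lemma sub_fst (x y : Tr k V E s t) : (x - y).1 = x.1 - y.1 := rfl
lemma sub_snd1 (x y : Tr k V E s t) : (x - y).2.1 = x.2.1 - y.2.1 := rfl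
lemma sub_snd2 (x y : Tr k V E s t) : (x - y).2.2 = x.2.2 - y.2.2 := rfl

lemma sandwich (u R w : Tr k V E s t) (h0 : R.1 = 0) (h1 : R.2.1 = 0) (p : E × E) :
    (u * R * w).2.2 p = u.1 (s p.1) * R.2.2 p * w.1 (t p.2) := by
  have h0' : ∀ v, R.1 v = 0 := fun v => by rw [h0]; rfl
  have h1' : ∀ a, R.2.1 a = 0 := fun a => by rw [h1]; rfl
  show (mul (mul u R) w).2.2 p = _
  unfold mul
  dsimp only
  rw [h0', h0', h0', h1', h1']
  split_ifs <;> ring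

end Trunc3



/-- The defining relations of the path algebra of a quiver with vertex set `V`, arrow
set `E`, and source/target maps `s, t : E → V`, presented as a quotient of the free
algebra on `V ⊕ E`. -/
inductive PathRel (k : Type*) [Field k] (V E : Type*) [Fintype V] [DecidableEq V]
    (s t : E → V) : FreeAlgebra k (V ⊕ E) → FreeAlgebra k (V ⊕ E) → Prop
  | vertex (i j : V) : PathRel k V E s t
      (FreeAlgebra.ι k (Sum.inl i) * FreeAlgebra.ι k (Sum.inl j))
      (if i = j then FreeAlgebra.ι k (Sum.inl i) else 0)
  | total : PathRel k V E s t (∑ i : V, FreeAlgebra.ι k (Sum.inl i)) 1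
  | source (e : E) : PathRel k V E s t
      (FreeAlgebra.ι k (Sum.inl (s e)) * FreeAlgebra.ι k (Sum.inr e))
      (FreeAlgebra.ι k (Sum.inr e))
  | target (e : E) : PathRel k V E s t
      (FreeAlgebra.ι k (Sum.inr e) * FreeAlgebra.ι k (Sum.inl (t e)))
      (FreeAlgebra.ι k (Sum.inr e))

section

variable (k : Type*) [Field k] (V E0 : Type*) [Fintype V] [DecidableEq V] [Fintype E0]
  (src tgt : E0 → V)

/-- The path algebra of the doubled quiver `Q̄` (arrows `E0 ⊕ E0`, where `inr a` is the
reverse `a*` of the arrow `inl a`). -/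
abbrev PathAlg : Type _ :=
  RingQuot (PathRel k V (E0 ⊕ E0) (Sum.elim src tgt) (Sum.elim tgt src))

/-- The image of an arrow of `Q̄` in the path algebra. -/
noncomputable def arrow (a : E0 ⊕ E0) : PathAlg k V E0 src tgt :=
  RingQuot.mkAlgHom k _ (FreeAlgebra.ι k (Sum.inr a))

/-- The vertex idempotent of the path algebra at `i ∈ V`. -/
noncomputable def vertex (i : V) : PathAlg k V E0 src tgt :=
  RingQuot.mkAlgHom k _ (FreeAlgebra.ι k (Sum.inl i))

/-- The span of (images of) paths of length at least `m` in the path algebra. -/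
noncomputable def lenGe (m : ℕ) : Submodule k (PathAlg k V E0 src tgt) :=
  Submodule.span k {z | ∃ l : List (E0 ⊕ E0), m ≤ l.length ∧
    z = (l.map (arrow k V E0 src tgt)).prod}

/-- The additive preprojective relation `r_add = ∑_a (a a* - a* a)`. -/
noncomputable def radd : PathAlg k V E0 src tgt :=
  ∑ a : E0, (arrow k V E0 src tgt (Sum.inl a) * arrow k V E0 src tgt (Sum.inr a) -
    arrow k V E0 src tgt (Sum.inr a) * arrow k V E0 src tgt (Sum.inl a))

end


section Helpers

variable (k : Type*) [Field k] (V E0 : Type*) [Fintype V] [DecidableEq V] [Fintype E0]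
  (src tgt : E0 → V)

lemma prod_arrow_mem_lenGe (l : List (E0 ⊕ E0)) :
    (l.map (arrow k V E0 src tgt)).prod ∈ lenGe k V E0 src tgt l.length :=
  Submodule.subset_span ⟨l, le_refl _, rfl⟩

lemma arrow_mem_lenGe_one (a : E0 ⊕ E0) :
    arrow k V E0 src tgt a ∈ lenGe k V E0 src tgt 1 :=
  Submodule.subset_span ⟨[a], by simp, by simp⟩

lemma lenGe_antitone {m n : ℕ} (hmn : m ≤ n) :
    lenGe k V E0 src tgt n ≤ lenGe k V E0 src tgt m := by
  apply Submodule.span_mono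
  rintro z ⟨l, hl, rfl⟩
  exact ⟨l, hmn.trans hl, rfl⟩

lemma mul_mem_lenGe {m n : ℕ} {x y : PathAlg k V E0 src tgt}
    (hx : x ∈ lenGe k V E0 src tgt m) (hy : y ∈ lenGe k V E0 src tgt n) :
    x * y ∈ lenGe k V E0 src tgt (m + n) := by
  have h : lenGe k V E0 src tgt m * lenGe k V E0 src tgt n ≤ lenGe k V E0 src tgt (m + n) := by
    rw [lenGe, lenGe, Submodule.span_mul_span]
    apply Submodule.span_le.mpr
    rintro z hz
    rw [Set.mem_mul] at hz
    obtain ⟨z1, ⟨l1, hl1, rfl⟩, z2, ⟨l2, hl2, rfl⟩, rfl⟩ := hz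
    apply Submodule.subset_span
    refine ⟨l1 ++ l2, ?_, ?_⟩
    · rw [List.length_append]; omega
    · rw [List.map_append, List.prod_append]
  exact h (Submodule.mul_mem_mul hx hy)

/-- The evaluation of the truncation map on generators. -/
noncomputable def Lfree : FreeAlgebra k (V ⊕ (E0 ⊕ E0)) →ₐ[k]
    Trunc3.Tr k V (E0 ⊕ E0) (Sum.elim src tgt) (Sum.elim tgt src) :=
  FreeAlgebra.lift k (Sum.elim Trunc3.eV Trunc3.eA)

lemma Lfree_rel : ∀ ⦃x y : FreeAlgebra k (V ⊕ (E0 ⊕ E0))⦄,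
    PathRel k V (E0 ⊕ E0) (Sum.elim src tgt) (Sum.elim tgt src) x y →
    Lfree k V E0 src tgt x = Lfree k V E0 src tgt y := by
  intro x y h
  cases h with
  | vertex i j =>
    rw [map_mul, apply_ite (Lfree k V E0 src tgt), map_zero]
    simp only [Lfree, FreeAlgebra.lift_ι_apply, Sum.elim_inl]
    rw [Trunc3.eV_mul_eV]
  | total =>
    rw [map_sum, map_one]
    simp only [Lfree, FreeAlgebra.lift_ι_apply, Sum.elim_inl]
    exact Trunc3.sum_eV
  | source e =>
    rw [map_mul]
    simp only [Lfree, FreeAlgebra.lift_ι_apply, Sum.elim_inl, Sum.elim_inr]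
    exact Trunc3.eV_mul_eA e
  | target e =>
    rw [map_mul]
    simp only [Lfree, FreeAlgebra.lift_ι_apply, Sum.elim_inl, Sum.elim_inr]
    exact Trunc3.eA_mul_eV e

/-- The truncation homomorphism to the length-`≤ 2` model. -/
noncomputable def Theta : PathAlg k V E0 src tgt →ₐ[k]
    Trunc3.Tr k V (E0 ⊕ E0) (Sum.elim src tgt) (Sum.elim tgt src) :=
  RingQuot.liftAlgHom k ⟨Lfree k V E0 src tgt, Lfree_rel k V E0 src tgt⟩

lemma Theta_arrow (a : E0 ⊕ E0) :
    Theta k V E0 src tgt (arrow k V E0 src tgt a) = Trunc3.eA a := by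
  rw [arrow, Theta, RingQuot.liftAlgHom_mkAlgHom_apply]
  simp [Lfree, FreeAlgebra.lift_ι_apply]

lemma Theta_lenGe3 {z : PathAlg k V E0 src tgt} (hz : z ∈ lenGe k V E0 src tgt 3) :
    Theta k V E0 src tgt z = 0 := by
  have : lenGe k V E0 src tgt 3 ≤ LinearMap.ker (Theta k V E0 src tgt).toLinearMap := by
    apply Submodule.span_le.mpr
    rintro z ⟨l, hl, rfl⟩
    have h1 : (Theta k V E0 src tgt) ((l.map (arrow k V E0 src tgt)).prod) =
        (l.map Trunc3.eA).prod := by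
      rw [map_list_prod, List.map_map]
      congr 1
      apply List.map_congr_left
      intro e _
      exact Theta_arrow k V E0 src tgt e
    have h2 : ((l.map Trunc3.eA :
        List (Trunc3.Tr k V (E0 ⊕ E0) (Sum.elim src tgt) (Sum.elim tgt src)))).prod = 0 := by
      apply Trunc3.prod_len3
      · rw [List.length_map]; exact hl
      · intro x hx
        rw [List.mem_map] at hx
        obtain ⟨e, _, rfl⟩ := hx
        rfl
    exact LinearMap.mem_ker.mpr (h1.trans h2)
  exact this hz

/-- The submodule of admissible degree-2 parts. -/
noncomputable def Wsub :
    Submodule k (Trunc3.Tr k V (E0 ⊕ E0) (Sum.elim src tgt) (Sum.elim tgt src)) where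
  carrier := {x | ∀ a b : E0,
    (src a = src b → x.2.2 (Sum.inl a, Sum.inr a) = x.2.2 (Sum.inl b, Sum.inr b)) ∧
    (src a = tgt b → x.2.2 (Sum.inl a, Sum.inr a) = - x.2.2 (Sum.inr b, Sum.inl b)) ∧
    (tgt a = src b → - x.2.2 (Sum.inr a, Sum.inl a) = x.2.2 (Sum.inl b, Sum.inr b)) ∧
    (tgt a = tgt b → x.2.2 (Sum.inr a, Sum.inl a) = x.2.2 (Sum.inr b, Sum.inl b))}
  add_mem' := by
    intro x y hx hy a b
    obtain ⟨h1, h2, h3, h4⟩ := hx a b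
    obtain ⟨h1', h2', h3', h4'⟩ := hy a b
    have e : ∀ p, (x + y).2.2 p = x.2.2 p + y.2.2 p := fun _ => rfl
    refine ⟨fun h => ?_, fun h => ?_, fun h => ?_, fun h => ?_⟩
    · rw [e, e, h1 h, h1' h]
    · rw [e, e, h2 h, h2' h]; ring
    · rw [e, e, ← h3 h, ← h3' h]; ring
    · rw [e, e, h4 h, h4' h]
  zero_mem' := by
    intro a b
    have e : ∀ p : (E0 ⊕ E0) × (E0 ⊕ E0),
        (0 : Trunc3.Tr k V (E0 ⊕ E0) (Sum.elim src tgt) (Sum.elim tgt src)).2.2 p = 0 :=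
      fun _ => rfl
    refine ⟨fun _ => rfl, fun _ => ?_, fun _ => ?_, fun _ => rfl⟩ <;> rw [e, e] <;> ring
  smul_mem' := by
    intro r x hx a b
    obtain ⟨h1, h2, h3, h4⟩ := hx a b
    have e : ∀ p, (r • x).2.2 p = r * x.2.2 p := fun _ => rfl
    refine ⟨fun h => ?_, fun h => ?_, fun h => ?_, fun h => ?_⟩
    · rw [e, e, h1 h]
    · rw [e, e, h2 h]; ring
    · rw [e, e, ← h3 h]; ring
    · rw [e, e, h4 h]

lemma mem_Wsub {x : Trunc3.Tr k V (E0 ⊕ E0) (Sum.elim src tgt) (Sum.elim tgt src)} :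
    x ∈ Wsub k V E0 src tgt ↔ ∀ a b : E0,
    (src a = src b → x.2.2 (Sum.inl a, Sum.inr a) = x.2.2 (Sum.inl b, Sum.inr b)) ∧
    (src a = tgt b → x.2.2 (Sum.inl a, Sum.inr a) = - x.2.2 (Sum.inr b, Sum.inl b)) ∧
    (tgt a = src b → - x.2.2 (Sum.inr a, Sum.inl a) = x.2.2 (Sum.inl b, Sum.inr b)) ∧
    (tgt a = tgt b → x.2.2 (Sum.inr a, Sum.inl a) = x.2.2 (Sum.inr b, Sum.inl b)) :=
  Iff.rfl

lemma sandwich_mem_W (u w R : Trunc3.Tr k V (E0 ⊕ E0) (Sum.elim src tgt) (Sum.elim tgt src))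
    (h0 : R.1 = 0) (h1 : R.2.1 = 0)
    (hval1 : ∀ a : E0, R.2.2 (Sum.inl a, Sum.inr a) = 1)
    (hval2 : ∀ a : E0, R.2.2 (Sum.inr a, Sum.inl a) = -1) :
    u * R * w ∈ Wsub k V E0 src tgt := by
  rw [mem_Wsub]
  intro a b
  have key := Trunc3.sandwich u R w h0 h1
  refine ⟨fun h => ?_, fun h => ?_, fun h => ?_, fun h => ?_⟩ <;>
    rw [key, key] <;>
    dsimp only [Sum.elim_inl, Sum.elim_inr]
  · rw [hval1 a, hval1 b, h]
  · rw [hval1 a, hval2 b, h]; ring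
  · rw [hval2 a, hval1 b, h]; ring
  · rw [hval2 a, hval2 b, h]

lemma Theta_radd_eq : Theta k V E0 src tgt (radd k V E0 src tgt) =
    ∑ a : E0, (Trunc3.eA (Sum.inl a) * Trunc3.eA (Sum.inr a) -
      Trunc3.eA (Sum.inr a) * Trunc3.eA (Sum.inl a)) := by
  rw [radd, map_sum]
  refine Finset.sum_congr rfl fun a _ => ?_
  rw [map_sub, map_mul, map_mul, Theta_arrow, Theta_arrow]


open scoped Classical in
lemma eAval1 (a b : E0) :
    ((Trunc3.eA (Sum.inl b) * Trunc3.eA (Sum.inr b) -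
      Trunc3.eA (Sum.inr b) * Trunc3.eA (Sum.inl b) :
      Trunc3.Tr k V (E0 ⊕ E0) (Sum.elim src tgt) (Sum.elim tgt src))).2.2
        (Sum.inl a, Sum.inr a) = if b = a then 1 else 0 := by
  rw [Trunc3.sub_snd2, Pi.sub_apply, Trunc3.eA_mul_eA, Trunc3.eA_mul_eA]
  dsimp only [Sum.elim_inl, Sum.elim_inr]
  simp only [eq_self_iff_true, if_true]
  by_cases hba : b = a <;> simp [hba]

open scoped Classical in
lemma eAval2 (a b : E0) :
    ((Trunc3.eA (Sum.inl b) * Trunc3.eA (Sum.inr b) -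
      Trunc3.eA (Sum.inr b) * Trunc3.eA (Sum.inl b) :
      Trunc3.Tr k V (E0 ⊕ E0) (Sum.elim src tgt) (Sum.elim tgt src))).2.2
        (Sum.inr a, Sum.inl a) = if b = a then -1 else 0 := by
  rw [Trunc3.sub_snd2, Pi.sub_apply, Trunc3.eA_mul_eA, Trunc3.eA_mul_eA]
  dsimp only [Sum.elim_inl, Sum.elim_inr]
  simp only [eq_self_iff_true, if_true]
  by_cases hba : b = a <;> simp [hba]

open scoped Classical in
lemma Theta_radd_facts :
    (Theta k V E0 src tgt (radd k V E0 src tgt)).1 = 0 ∧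
    (Theta k V E0 src tgt (radd k V E0 src tgt)).2.1 = 0 ∧
    (∀ a : E0, (Theta k V E0 src tgt (radd k V E0 src tgt)).2.2 (Sum.inl a, Sum.inr a) = 1) ∧
    (∀ a : E0, (Theta k V E0 src tgt (radd k V E0 src tgt)).2.2 (Sum.inr a, Sum.inl a) = -1) := by
  rw [Theta_radd_eq]
  refine ⟨?_, ?_, ?_, ?_⟩
  · rw [Trunc3.fst_sum]
    refine Finset.sum_eq_zero fun a _ => ?_
    rw [Trunc3.sub_fst, Trunc3.eA_mul_eA, Trunc3.eA_mul_eA]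
    show (0 : V → k) - 0 = 0
    simp
  · rw [Trunc3.snd1_sum]
    refine Finset.sum_eq_zero fun a _ => ?_
    rw [Trunc3.sub_snd1, Trunc3.eA_mul_eA, Trunc3.eA_mul_eA]
    show (0 : (E0 ⊕ E0) → k) - 0 = 0
    simp
  · intro a
    rw [Trunc3.snd2_sum, Finset.sum_apply]
    rw [Finset.sum_congr rfl fun b _ => eAval1 k V E0 src tgt a b]
    simp
  · intro a
    rw [Trunc3.snd2_sum, Finset.sum_apply]
    rw [Finset.sum_congr rfl fun b _ => eAval2 k V E0 src tgt a b]
    simp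

end Helpers

/-- Let `Q` be a quiver without loops with doubled quiver `Q̄`, and let `J = (r)` and
`J' = (r_add)` be the two-sided ideals of the path algebra `P = kQ̄` generated by `r`
and by the additive preprojective relation `r_add`, where `r - r_add` is a combination
of paths of length `≥ 3`.  Suppose `φ : P/J → P/J'` is a (well-defined) algebra map
fixing the vertex idempotents and sending each arrow `a` of `Q̄` to `c_a·a` plus paths
of length `≥ 2`.  Then the degree-2 part of `φ(r_add)` is
`∑_a c_a c_{a*}(a a* - a* a)` (i.e. their difference lies in paths of length `≥ 3`);
hence if `φ` is surjective, all products `c_a·c_{a*}` for arrows `a` of `Q` incident to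
a fixed vertex are equal. -/
theorem triangular_quadratic_part (k : Type*) [Field k]
    (V E0 : Type*) [Fintype V] [DecidableEq V] [Fintype E0]
    (src tgt : E0 → V)
    (hnoloop : ∀ e : E0, src e ≠ tgt e)
    (r : PathAlg k V E0 src tgt)
    (hr : r - radd k V E0 src tgt ∈ lenGe k V E0 src tgt 3)
    (A B : Type*) [Ring A] [Algebra k A] [Ring B] [Algebra k B]
    (πA : PathAlg k V E0 src tgt →ₐ[k] A) (πB : PathAlg k V E0 src tgt →ₐ[k] B)
    (hπAsurj : Function.Surjective πA) (hπBsurj : Function.Surjective πB)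
    (hJA : ∀ x, πA x = 0 ↔ x ∈ Submodule.span k
      {z : PathAlg k V E0 src tgt | ∃ p q, z = p * r * q})
    (hJB : ∀ x, πB x = 0 ↔ x ∈ Submodule.span k
      {z : PathAlg k V E0 src tgt | ∃ p q, z = p * radd k V E0 src tgt * q})
    (φ : A →ₐ[k] B)
    (hφe : ∀ i : V, φ (πA (vertex k V E0 src tgt i)) = πB (vertex k V E0 src tgt i))
    (c cstar : E0 → k)
    (hφa : ∀ a : E0,
      φ (πA (arrow k V E0 src tgt (Sum.inl a))) - c a • πB (arrow k V E0 src tgt (Sum.inl a)) ∈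
        Submodule.map πB.toLinearMap (lenGe k V E0 src tgt 2))
    (hφastar : ∀ a : E0,
      φ (πA (arrow k V E0 src tgt (Sum.inr a))) -
          cstar a • πB (arrow k V E0 src tgt (Sum.inr a)) ∈
        Submodule.map πB.toLinearMap (lenGe k V E0 src tgt 2)) :
    (φ (πA (radd k V E0 src tgt)) -
        πB (∑ a : E0, (c a * cstar a) •
          (arrow k V E0 src tgt (Sum.inl a) * arrow k V E0 src tgt (Sum.inr a) -
            arrow k V E0 src tgt (Sum.inr a) * arrow k V E0 src tgt (Sum.inl a))) ∈
      Submodule.map πB.toLinearMap (lenGe k V E0 src tgt 3)) ∧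
    (Function.Surjective φ →
      ∀ (v : V) (a b : E0),
        (src a = v ∨ tgt a = v) → (src b = v ∨ tgt b = v) →
        c a * cstar a = c b * cstar b) := by
  classical
  set ar : E0 ⊕ E0 → PathAlg k V E0 src tgt := arrow k V E0 src tgt with har
  set lg : ℕ → Submodule k (PathAlg k V E0 src tgt) := lenGe k V E0 src tgt with hlg
  set ψ : PathAlg k V E0 src tgt →ₐ[k] B := φ.comp πA with hψ
  set ce : E0 ⊕ E0 → k := Sum.elim c cstar with hce
  have hψ_apply : ∀ z, φ (πA z) = ψ z := fun z => rfl
  -- Step A: structure of ψ on arrows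
  have hψa : ∀ e : E0 ⊕ E0, ∃ w ∈ lg 2, ψ (ar e) = ce e • πB (ar e) + πB w := by
    intro e
    cases e with
    | inl a =>
      obtain ⟨w, hw, hw'⟩ := hφa a
      refine ⟨w, hw, ?_⟩
      have hw'' : πB w = φ (πA (ar (Sum.inl a))) - c a • πB (ar (Sum.inl a)) := hw'
      rw [← hψ_apply, hw'']
      show _ = c a • πB (ar (Sum.inl a)) + _
      rw [add_sub_cancel]
    | inr a =>
      obtain ⟨w, hw, hw'⟩ := hφastar a
      refine ⟨w, hw, ?_⟩
      have hw'' : πB w = φ (πA (ar (Sum.inr a))) - cstar a • πB (ar (Sum.inr a)) := hw'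
      rw [← hψ_apply, hw'']
      show _ = cstar a • πB (ar (Sum.inr a)) + _
      rw [add_sub_cancel]
  -- Step B: ψ of an arrow is πB of a length-≥1 element
  have harB : ∀ e : E0 ⊕ E0, ∃ u ∈ lg 1, ψ (ar e) = πB u := by
    intro e
    obtain ⟨w, hw2, hw⟩ := hψa e
    refine ⟨ce e • ar e + w, ?_, ?_⟩
    · exact add_mem (Submodule.smul_mem _ _ (arrow_mem_lenGe_one k V E0 src tgt e))
        (lenGe_antitone k V E0 src tgt (by norm_num) hw2)
    · rw [hw, map_add, map_smul]
  -- Step C: key quadratic computation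
  have key : ∀ u v : E0 ⊕ E0,
      ψ (ar u * ar v) - (ce u * ce v) • πB (ar u * ar v) ∈
        Submodule.map πB.toLinearMap (lg 3) := by
    intro u v
    obtain ⟨wu, hwu, hu⟩ := hψa u
    obtain ⟨wv, hwv, hv⟩ := hψa v
    set d : PathAlg k V E0 src tgt := ce u • (ar u * wv) + ce v • (wu * ar v) + wu * wv with hd
    have hdmem : d ∈ lg 3 := by
      refine add_mem (add_mem (Submodule.smul_mem _ _ ?_) (Submodule.smul_mem _ _ ?_)) ?_
      · have := mul_mem_lenGe k V E0 src tgt (arrow_mem_lenGe_one k V E0 src tgt u) hwv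
        simpa using this
      · have := mul_mem_lenGe k V E0 src tgt hwu (arrow_mem_lenGe_one k V E0 src tgt v)
        simpa using this
      · have := mul_mem_lenGe k V E0 src tgt hwu hwv
        exact lenGe_antitone k V E0 src tgt (by norm_num) this
    have hexp : (ce u • ar u + wu) * (ce v • ar v + wv) =
        (ce u * ce v) • (ar u * ar v) + d := by
      simp only [hd, add_mul, mul_add, smul_mul_assoc, mul_smul_comm, smul_add,
        smul_smul, mul_comm]
      abel
    have hψuv : ψ (ar u * ar v) = (ce u * ce v) • πB (ar u * ar v) + πB d := by
      rw [map_mul, hu, hv]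
      rw [show ce u • πB (ar u) + πB wu = πB (ce u • ar u + wu) by rw [map_add, map_smul]]
      rw [show ce v • πB (ar v) + πB wv = πB (ce v • ar v + wv) by rw [map_add, map_smul]]
      rw [← map_mul, hexp, map_add, map_smul]
    rw [hψuv, add_sub_cancel_left]
    exact ⟨d, hdmem, rfl⟩
  -- Part 1
  have goal1 : φ (πA (radd k V E0 src tgt)) -
      πB (∑ a : E0, (c a * cstar a) •
        (arrow k V E0 src tgt (Sum.inl a) * arrow k V E0 src tgt (Sum.inr a) -
          arrow k V E0 src tgt (Sum.inr a) * arrow k V E0 src tgt (Sum.inl a))) ∈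
      Submodule.map πB.toLinearMap (lg 3) := by
    have hrw : φ (πA (radd k V E0 src tgt)) -
        πB (∑ a : E0, (c a * cstar a) •
          (arrow k V E0 src tgt (Sum.inl a) * arrow k V E0 src tgt (Sum.inr a) -
            arrow k V E0 src tgt (Sum.inr a) * arrow k V E0 src tgt (Sum.inl a))) =
        ∑ a : E0, ((ψ (ar (Sum.inl a) * ar (Sum.inr a)) -
            (c a * cstar a) • πB (ar (Sum.inl a) * ar (Sum.inr a))) -
          (ψ (ar (Sum.inr a) * ar (Sum.inl a)) -
            (c a * cstar a) • πB (ar (Sum.inr a) * ar (Sum.inl a)))) := by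
      rw [hψ_apply, radd, map_sum, map_sum, ← Finset.sum_sub_distrib]
      refine Finset.sum_congr rfl fun a _ => ?_
      rw [map_sub, map_mul, map_mul, map_smul, map_sub, map_mul, map_mul]
      rw [← har, smul_sub]
      abel
    rw [hrw]
    refine Submodule.sum_mem _ fun a _ => sub_mem ?_ ?_
    · exact key (Sum.inl a) (Sum.inr a)
    · have h2 := key (Sum.inr a) (Sum.inl a)
      have hcc : ce (Sum.inr a) * ce (Sum.inl a) = c a * cstar a := mul_comm _ _
      rwa [hcc] at h2
  refine ⟨goal1, ?_⟩
  -- Part 2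
  intro _ v a b hav hbv
  have hπAr : πA r = 0 :=
    (hJA r).mpr (Submodule.subset_span ⟨1, 1, by rw [one_mul, mul_one]⟩)
  have hψ3 : ∀ y ∈ lg 3, ψ y ∈ Submodule.map πB.toLinearMap (lg 3) := by
    have hprod : ∀ l' : List (E0 ⊕ E0), ∃ u ∈ lg l'.length,
        ψ ((l'.map ar).prod) = πB u := by
      intro l'
      induction l' with
      | nil =>
        exact ⟨1, Submodule.subset_span ⟨[], by simp, by simp⟩, by simp⟩
      | cons e l' ih =>
        obtain ⟨u, hu, hu'⟩ := ih
        obtain ⟨u0, hu0, hu0'⟩ := harB e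
        refine ⟨u0 * u, ?_, ?_⟩
        · have := mul_mem_lenGe k V E0 src tgt hu0 hu
          simpa [Nat.add_comm] using this
        · rw [List.map_cons, List.prod_cons, map_mul, hu0', hu', ← map_mul]
    have hle : lg 3 ≤ Submodule.comap ψ.toLinearMap
        (Submodule.map πB.toLinearMap (lg 3)) := by
      rw [hlg, lenGe]
      apply Submodule.span_le.mpr
      rintro z ⟨l, hl, rfl⟩
      obtain ⟨u, hu, hu'⟩ := hprod l
      exact Submodule.mem_comap.mpr
        ⟨u, lenGe_antitone k V E0 src tgt hl hu, hu'.symm⟩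
    exact fun y hy => hle hy
  have hψradd : ψ (radd k V E0 src tgt) ∈ Submodule.map πB.toLinearMap (lg 3) := by
    have h1 : πA (radd k V E0 src tgt) = - πA (r - radd k V E0 src tgt) := by
      rw [map_sub, hπAr, zero_sub, neg_neg]
    have h2 : ψ (radd k V E0 src tgt) = - ψ (r - radd k V E0 src tgt) := by
      rw [← hψ_apply, ← hψ_apply, h1, map_neg]
    rw [h2]
    exact neg_mem (hψ3 _ hr)
  set x : PathAlg k V E0 src tgt := ∑ a : E0, (c a * cstar a) •
      (arrow k V E0 src tgt (Sum.inl a) * arrow k V E0 src tgt (Sum.inr a) -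
        arrow k V E0 src tgt (Sum.inr a) * arrow k V E0 src tgt (Sum.inl a)) with hxdef
  have hx3 : πB x ∈ Submodule.map πB.toLinearMap (lg 3) := by
    have := sub_mem hψradd (by rw [hψ_apply] at goal1; exact goal1)
    rwa [sub_sub_cancel] at this
  obtain ⟨w3, hw3, hw3'⟩ := hx3
  have hxI : x - w3 ∈ Submodule.span k
      {z : PathAlg k V E0 src tgt | ∃ p q, z = p * radd k V E0 src tgt * q} := by
    apply (hJB _).mp
    have : πB w3 = πB x := hw3'
    rw [map_sub, this, sub_self]
  -- Pass to the truncated model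
  set Θ := Theta k V E0 src tgt with hΘdef
  have hI_W : Θ (x - w3) ∈ Wsub k V E0 src tgt := by
    have hle : Submodule.span k
        {z : PathAlg k V E0 src tgt | ∃ p q, z = p * radd k V E0 src tgt * q} ≤
        Submodule.comap Θ.toLinearMap (Wsub k V E0 src tgt) := by
      apply Submodule.span_le.mpr
      rintro z ⟨p, q, rfl⟩
      refine Submodule.mem_comap.mpr ?_
      show Θ (p * radd k V E0 src tgt * q) ∈ _
      rw [map_mul, map_mul]
      obtain ⟨h0, h1, hv1, hv2⟩ := Theta_radd_facts k V E0 src tgt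
      exact sandwich_mem_W k V E0 src tgt _ _ _ h0 h1 hv1 hv2
    exact hle hxI
  have hΘx : Θ x ∈ Wsub k V E0 src tgt := by
    have heq : Θ x = Θ (x - w3) + Θ w3 := by rw [← map_add, sub_add_cancel]
    rw [heq, hΘdef, Theta_lenGe3 k V E0 src tgt hw3, add_zero]
    exact hI_W
  -- Values of Θ x
  have hxval : Θ x = ∑ b : E0, (c b * cstar b) •
      (Trunc3.eA (Sum.inl b) * Trunc3.eA (Sum.inr b) -
        Trunc3.eA (Sum.inr b) * Trunc3.eA (Sum.inl b)) := by
    rw [hxdef, map_sum]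
    refine Finset.sum_congr rfl fun b _ => ?_
    simp only [map_smul, map_sub, map_mul, hΘdef, Theta_arrow]
  have hval1 : ∀ a : E0, (Θ x).2.2 (Sum.inl a, Sum.inr a) = c a * cstar a := by
    intro a
    rw [hxval, Trunc3.snd2_sum, Finset.sum_apply]
    have : ∀ b : E0, (((c b * cstar b) •
        (Trunc3.eA (Sum.inl b) * Trunc3.eA (Sum.inr b) -
          Trunc3.eA (Sum.inr b) * Trunc3.eA (Sum.inl b)) :
        Trunc3.Tr k V (E0 ⊕ E0) (Sum.elim src tgt) (Sum.elim tgt src))).2.2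
          (Sum.inl a, Sum.inr a) = if b = a then c b * cstar b else 0 := by
      intro b
      have e : (((c b * cstar b) • (Trunc3.eA (Sum.inl b) * Trunc3.eA (Sum.inr b) -
          Trunc3.eA (Sum.inr b) * Trunc3.eA (Sum.inl b)) :
          Trunc3.Tr k V (E0 ⊕ E0) (Sum.elim src tgt) (Sum.elim tgt src))).2.2
            (Sum.inl a, Sum.inr a) = (c b * cstar b) *
          ((Trunc3.eA (Sum.inl b) * Trunc3.eA (Sum.inr b) -
            Trunc3.eA (Sum.inr b) * Trunc3.eA (Sum.inl b) :
            Trunc3.Tr k V (E0 ⊕ E0) (Sum.elim src tgt) (Sum.elim tgt src))).2.2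
            (Sum.inl a, Sum.inr a) := rfl
      rw [e, eAval1 k V E0 src tgt a b]
      by_cases hba : b = a <;> simp [hba]
    rw [Finset.sum_congr rfl fun b _ => this b]
    simp
  have hval2 : ∀ a : E0, (Θ x).2.2 (Sum.inr a, Sum.inl a) = -(c a * cstar a) := by
    intro a
    rw [hxval, Trunc3.snd2_sum, Finset.sum_apply]
    have : ∀ b : E0, (((c b * cstar b) •
        (Trunc3.eA (Sum.inl b) * Trunc3.eA (Sum.inr b) -
          Trunc3.eA (Sum.inr b) * Trunc3.eA (Sum.inl b)) :
        Trunc3.Tr k V (E0 ⊕ E0) (Sum.elim src tgt) (Sum.elim tgt src))).2.2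
          (Sum.inr a, Sum.inl a) = if b = a then -(c b * cstar b) else 0 := by
      intro b
      have e : (((c b * cstar b) • (Trunc3.eA (Sum.inl b) * Trunc3.eA (Sum.inr b) -
          Trunc3.eA (Sum.inr b) * Trunc3.eA (Sum.inl b)) :
          Trunc3.Tr k V (E0 ⊕ E0) (Sum.elim src tgt) (Sum.elim tgt src))).2.2
            (Sum.inr a, Sum.inl a) = (c b * cstar b) *
          ((Trunc3.eA (Sum.inl b) * Trunc3.eA (Sum.inr b) -
            Trunc3.eA (Sum.inr b) * Trunc3.eA (Sum.inl b) :
            Trunc3.Tr k V (E0 ⊕ E0) (Sum.elim src tgt) (Sum.elim tgt src))).2.2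
            (Sum.inr a, Sum.inl a) := rfl
      rw [e, eAval2 k V E0 src tgt a b]
      by_cases hba : b = a <;> simp [hba]
    rw [Finset.sum_congr rfl fun b _ => this b]
    simp
  obtain ⟨H1, H2, H3, H4⟩ := (mem_Wsub k V E0 src tgt).mp hΘx a b
  rcases hav with ha | ha <;> rcases hbv with hb | hb
  · have h := H1 (ha.trans hb.symm)
    rwa [hval1 a, hval1 b] at h
  · have h := H2 (ha.trans hb.symm)
    rw [hval1 a, hval2 b, neg_neg] at h
    exact h
  · have h := H3 (ha.trans hb.symm)
    rw [hval2 a, hval1 b, neg_neg] at h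
    exact h
  · have h := H4 (ha.trans hb.symm)
    rw [hval2 a, hval2 b] at h
    exact neg_injective h
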